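/- Let Φ(t) be the solution of the matrix ODE M'(t) = A(ω_t) M(t), M(0) = Id, where each A(ω_t) is Metzler and t ↦ A(ω_t) is bounded by a constant r in operator norm. Then Φ(t) is a Metzler matrix with strictly positive diagonal entries for all t ≥ 0; more precisely e^{2rt} Φ(t) ≥ e^{rt} Id entrywise. -/
import Mathlib


open Matrix

/-- A Metzler matrix: off-diagonal entries are nonnegative. -/
def Matrix.IsMetzler {d : ℕ} (M : Matrix (Fin d) (Fin d) ℝ) : Prop :=
  ∀ i j, i ≠ j → 0 ≤ M i j

theorem fundamental_solution_metzler_positive_diagonal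
    {d : ℕ} {S : Type*} [MetricSpace S]
    (A : S → Matrix (Fin d) (Fin d) ℝ) (hMetz : ∀ s, (A s).IsMetzler)
    (ω : ℝ → S) (r : ℝ)
    (hbound : ∀ t i j, |A (ω t) i j| ≤ r)
    (Φ : ℝ → Matrix (Fin d) (Fin d) ℝ)
    (hΦ : ∀ t i j, HasDerivAt (fun u => Φ u i j) ((A (ω t) * Φ t) i j) t)
    (hΦ0 : Φ 0 = 1) :
    ∀ t, 0 ≤ t →
      ((Φ t).IsMetzler ∧ ∀ i, 0 < Φ t i i) ∧
      ∀ i j, Real.exp (r * t) * (1 : Matrix (Fin d) (Fin d) ℝ) i j ≤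
        Real.exp (2 * r * t) * Φ t i j := by
  intro t ht
  set K : ℝ := r * d + 2 * r + 1 with hK
  have hΦcont : ∀ i j, Continuous fun u => Φ u i j := fun i j =>
    continuous_iff_continuousAt.2 fun u => (hΦ u i j).continuousAt
  have main : ∀ ε : ℝ, 0 < ε → ∀ i j,
      0 < Real.exp (2 * r * t) * Φ t i j
        - Real.exp (r * t) * (1 : Matrix (Fin d) (Fin d) ℝ) i j
        + ε * Real.exp (K * t) := by
    intro ε hε
    by_contra hcon
    push_neg at hcon
    obtain ⟨i₀, j₀, hij₀⟩ := hcon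
    set Y : ℝ → Fin d → Fin d → ℝ := fun u i j =>
      Real.exp (2 * r * u) * Φ u i j
        - Real.exp (r * u) * (1 : Matrix (Fin d) (Fin d) ℝ) i j
        + ε * Real.exp (K * u) with hYdef
    have hYcont : ∀ i j, Continuous fun u => Y u i j := by
      intro i j
      apply Continuous.add
      · apply Continuous.sub
        · exact (Real.continuous_exp.comp (continuous_const.mul continuous_id)).mul (hΦcont i j)
        · exact (Real.continuous_exp.comp (continuous_const.mul continuous_id)).mul
            continuous_const
      · exact continuous_const.mul (Real.continuous_exp.comp (continuous_const.mul continuous_id))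
    set Sset : Set ℝ := {u | u ∈ Set.Icc 0 t ∧ ∃ i j, Y u i j ≤ 0} with hSdef
    have hne : Sset.Nonempty := ⟨t, ⟨ht, le_refl t⟩, i₀, j₀, hij₀⟩
    have hbd : BddBelow Sset := ⟨0, fun x hx => hx.1.1⟩
    have hclosed : IsClosed Sset := by
      have heq : Sset = Set.Icc 0 t ∩ ⋃ i, ⋃ j, {u | Y u i j ≤ 0} := by
        ext u
        simp [hSdef, Set.mem_iUnion, and_assoc]
      rw [heq]
      exact isClosed_Icc.inter (isClosed_iUnion_of_finite fun i =>
        isClosed_iUnion_of_finite fun j => isClosed_le (hYcont i j) continuous_const)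
    set τ := sInf Sset with hτdef
    have hτS : τ ∈ Sset := hclosed.csInf_mem hne hbd
    obtain ⟨⟨hτ0, hτt⟩, i, j, hYτ⟩ := hτS
    have hr : 0 ≤ r := (abs_nonneg _).trans (hbound 0 i i)
    have hY0 : ∀ i' j', Y 0 i' j' = ε := by
      intro i' j'
      simp [hYdef, hΦ0]
    have hτpos : 0 < τ := by
      rcases lt_or_eq_of_le hτ0 with h | h
      · exact h
      · exfalso
        have h0S : (0 : ℝ) ∈ Sset := by rw [h]; exact hclosed.csInf_mem hne hbd
        obtain ⟨_, i', j', hle⟩ := h0S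
        rw [hY0 i' j'] at hle
        linarith
    have hbefore : ∀ u, 0 < u → u < τ → ∀ i' j', 0 < Y u i' j' := by
      intro u hu0 huτ i' j'
      by_contra hle
      push_neg at hle
      have huS : u ∈ Sset := ⟨⟨hu0.le, huτ.le.trans hτt⟩, i', j', hle⟩
      exact absurd (csInf_le hbd huS) (not_le.2 huτ)
    have hYτnonneg : ∀ k, 0 ≤ Y τ k j := by
      intro k
      have htend : Filter.Tendsto (fun u => Y u k j) (nhdsWithin τ (Set.Iio τ)) (nhds (Y τ k j)) :=
        ((hYcont k j).tendsto τ).mono_left nhdsWithin_le_nhds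
      refine ge_of_tendsto htend ?_
      filter_upwards [Ioo_mem_nhdsLT_of_mem (Set.mem_Ioc.2 ⟨hτpos, le_refl τ⟩)] with u hu
      exact (hbefore u hu.1 hu.2 k j).le
    have hYτ0 : Y τ i j = 0 := le_antisymm hYτ (hYτnonneg i)
    -- derivative of Y at τ in entry (i, j)
    have e2 : HasDerivAt (fun u => Real.exp (2 * r * u)) (Real.exp (2 * r * τ) * (2 * r)) τ := by
      simpa using ((hasDerivAt_id τ).const_mul (2 * r)).exp
    have e1 : HasDerivAt (fun u => Real.exp (r * u)) (Real.exp (r * τ) * r) τ := by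
      simpa using ((hasDerivAt_id τ).const_mul r).exp
    have e3 : HasDerivAt (fun u => Real.exp (K * u)) (Real.exp (K * τ) * K) τ := by
      simpa using ((hasDerivAt_id τ).const_mul K).exp
    have hD : HasDerivAt (fun u => Y u i j)
        (Real.exp (2 * r * τ) * (2 * r) * Φ τ i j
          + Real.exp (2 * r * τ) * (A (ω τ) * Φ τ) i j
          - Real.exp (r * τ) * r * (1 : Matrix (Fin d) (Fin d) ℝ) i j
          + ε * (Real.exp (K * τ) * K)) τ := by
      exact ((e2.mul (hΦ τ i j)).sub
        (e1.mul_const ((1 : Matrix (Fin d) (Fin d) ℝ) i j))).add (e3.const_mul ε)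
    have hP : ∀ k, Real.exp (r * τ) * (1 : Matrix (Fin d) (Fin d) ℝ) k j
        - ε * Real.exp (K * τ) ≤ Real.exp (2 * r * τ) * Φ τ k j := by
      intro k
      have := hYτnonneg k
      simp only [hYdef] at this
      linarith
    have hPi : Real.exp (2 * r * τ) * Φ τ i j
        = Real.exp (r * τ) * (1 : Matrix (Fin d) (Fin d) ℝ) i j - ε * Real.exp (K * τ) := by
      have := hYτ0
      simp only [hYdef] at this
      linarith
    have hsum : A (ω τ) i j * Real.exp (r * τ) - (d : ℝ) * (r * (ε * Real.exp (K * τ)))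
        ≤ Real.exp (2 * r * τ) * (A (ω τ) * Φ τ) i j := by
      rw [Matrix.mul_apply, Finset.mul_sum]
      have hterm : ∀ k ∈ Finset.univ,
          A (ω τ) i k * ((1 : Matrix (Fin d) (Fin d) ℝ) k j * Real.exp (r * τ))
            - r * (ε * Real.exp (K * τ))
          ≤ Real.exp (2 * r * τ) * (A (ω τ) i k * Φ τ k j) := by
        intro k _
        have hrw : Real.exp (2 * r * τ) * (A (ω τ) i k * Φ τ k j)
            = A (ω τ) i k * (Real.exp (2 * r * τ) * Φ τ k j) := by ring
        rw [hrw]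
        have hEpos : 0 < ε * Real.exp (K * τ) := mul_pos hε (Real.exp_pos _)
        have hAle : A (ω τ) i k ≤ r := (le_abs_self _).trans (hbound τ i k)
        by_cases hk : k = i
        · subst hk
          rw [hPi]
          nlinarith
        · have hA0 : 0 ≤ A (ω τ) i k := hMetz (ω τ) i k (fun h => hk h.symm)
          have := mul_le_mul_of_nonneg_left (hP k) hA0
          nlinarith
      have := Finset.sum_le_sum hterm
      refine le_trans (le_of_eq ?_) this
      rw [Finset.sum_sub_distrib, Finset.sum_const, Finset.card_univ, Fintype.card_fin]
      congr 1
      · simp only [Matrix.one_apply, mul_ite, ite_mul, mul_one, mul_zero, one_mul, zero_mul]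
        rw [Finset.sum_ite_eq' Finset.univ j (fun k => A (ω τ) i k * Real.exp (r * τ))]
        simp
      · simp [nsmul_eq_mul]
    have hAij : 0 ≤ r * (1 : Matrix (Fin d) (Fin d) ℝ) i j + A (ω τ) i j := by
      by_cases h : i = j
      · subst h
        simp only [Matrix.one_apply_eq, mul_one]
        have := hbound τ i i
        have := neg_abs_le (A (ω τ) i i)
        linarith
      · simp only [Matrix.one_apply_ne h, mul_zero, zero_add]
        exact hMetz (ω τ) i j h
    have hDpos : 0 < Real.exp (2 * r * τ) * (2 * r) * Φ τ i j
          + Real.exp (2 * r * τ) * (A (ω τ) * Φ τ) i j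
          - Real.exp (r * τ) * r * (1 : Matrix (Fin d) (Fin d) ℝ) i j
          + ε * (Real.exp (K * τ) * K) := by
      have h1 : 0 ≤ Real.exp (r * τ)
          * (r * (1 : Matrix (Fin d) (Fin d) ℝ) i j + A (ω τ) i j) :=
        mul_nonneg (Real.exp_pos _).le hAij
      have hEpos : 0 < ε * Real.exp (K * τ) := mul_pos hε (Real.exp_pos _)
      have hfirst : Real.exp (2 * r * τ) * (2 * r) * Φ τ i j
          = 2 * r * (Real.exp (r * τ) * (1 : Matrix (Fin d) (Fin d) ℝ) i j
            - ε * Real.exp (K * τ)) := by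
        rw [show Real.exp (2 * r * τ) * (2 * r) * Φ τ i j
          = 2 * r * (Real.exp (2 * r * τ) * Φ τ i j) by ring, hPi]
      rw [hfirst, hK]
      rw [hK] at hsum
      nlinarith [hsum, h1, hEpos]
    -- contradiction via slope
    have hslope := hasDerivAt_iff_tendsto_slope.mp hD
    have hev1 : ∀ᶠ u in nhdsWithin τ {τ}ᶜ, 0 < slope (fun v => Y v i j) τ u :=
      hslope.eventually (eventually_gt_nhds hDpos)
    have hmono : nhdsWithin τ (Set.Iio τ) ≤ nhdsWithin τ {τ}ᶜ :=
      nhdsWithin_mono τ (fun x hx => ne_of_lt hx)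
    have hev1' : ∀ᶠ u in nhdsWithin τ (Set.Iio τ), 0 < slope (fun v => Y v i j) τ u :=
      hev1.filter_mono hmono
    have hev2 : ∀ᶠ u in nhdsWithin τ (Set.Iio τ), u ∈ Set.Ioo (0 : ℝ) τ :=
      Ioo_mem_nhdsLT_of_mem (Set.mem_Ioc.2 ⟨hτpos, le_refl τ⟩)
    obtain ⟨u, hu1, hu2⟩ := (hev1'.and hev2).exists
    have hslopeval : 0 < (Y u i j - Y τ i j) / (u - τ) := by
      rwa [slope_def_field] at hu1
    have huτ : u - τ < 0 := sub_neg.2 hu2.2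
    have hYu : 0 < Y u i j := hbefore u hu2.1 hu2.2 i j
    rcases div_pos_iff.mp hslopeval with ⟨h1, h2⟩ | ⟨h1, h2⟩
    · linarith
    · rw [hYτ0] at h1
      linarith
  -- conclude the entrywise inequality
  have hX : ∀ i j, Real.exp (r * t) * (1 : Matrix (Fin d) (Fin d) ℝ) i j
      ≤ Real.exp (2 * r * t) * Φ t i j := by
    intro i j
    by_contra h
    push_neg at h
    set c := Real.exp (r * t) * (1 : Matrix (Fin d) (Fin d) ℝ) i j
      - Real.exp (2 * r * t) * Φ t i j with hc
    have hcpos : 0 < c := by rw [hc]; linarith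
    have := main (c / Real.exp (K * t)) (div_pos hcpos (Real.exp_pos _)) i j
    rw [div_mul_cancel₀ c (Real.exp_ne_zero _)] at this
    rw [hc] at this
    linarith
  refine ⟨⟨?_, ?_⟩, hX⟩
  · intro i j hij
    have h := hX i j
    rw [Matrix.one_apply_ne hij, mul_zero] at h
    nlinarith [Real.exp_pos (2 * r * t), h]
  · intro i
    have h := hX i i
    rw [Matrix.one_apply_eq, mul_one] at h
    nlinarith [Real.exp_pos (r * t), Real.exp_pos (2 * r * t), h]
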